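/- arXiv:1802.08735 — 3 statements merged into one kernel-verified Lean document; each statement's English description precedes it below -/
import Mathlib

section
/- In the binary setting with disjoint source–target supports and infinite-capacity embedding functions, there exists a feature-matching classifier whose target generalization error satisfies ε_t(h) ≥ 1 − ε_t(Ω*_t): concretely, if P_s(Ω*_s) = P_t(Ω*_t) = 1/2 where Ω*_s, Ω*_t are the optimal source and target decision regions, then the classifier given by the indicator of (X_s ∩ Ω*_s) ∪ (X_t ∩ (X \ Ω*_t)) achieves source error equal to the optimal source error ε_s(Ω*_s) while its target error equals 1 − ε_t(Ω*_t). -/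
open MeasureTheory Set

/-- Generalization error of the indicator classifier `1_Ω`. -/
noncomputable def eps {X : Type*} [MeasurableSpace X]
    (p : Measure (X × Bool)) (Ω : Set X) : ℝ :=
  ∫ z, |(if z.2 then (1 : ℝ) else 0) - Ω.indicator (1 : X → ℝ) z.1| ∂p

lemma eps_integrand_mem {X : Type*} (Ω : Set X) (z : X × Bool) :
    |(if z.2 then (1 : ℝ) else 0) - Ω.indicator (1 : X → ℝ) z.1| = 0 ∨
    |(if z.2 then (1 : ℝ) else 0) - Ω.indicator (1 : X → ℝ) z.1| = 1 := by
  by_cases h : z.1 ∈ Ω <;> cases z.2 <;> simp [h]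

lemma eps_integrable {X : Type*} [MeasurableSpace X]
    (p : Measure (X × Bool)) [IsProbabilityMeasure p] (Ω : Set X) (hΩ : MeasurableSet Ω) :
    Integrable (fun z : X × Bool =>
      |(if z.2 then (1 : ℝ) else 0) - Ω.indicator (1 : X → ℝ) z.1|) p := by
  have hmeas : Measurable (fun z : X × Bool =>
      |(if z.2 then (1 : ℝ) else 0) - Ω.indicator (1 : X → ℝ) z.1|) := by
    apply Measurable.abs
    apply Measurable.sub
    · exact (Measurable.of_discrete (f := fun b : Bool => if b then (1:ℝ) else 0)).comp measurable_snd
    · exact ((measurable_one.indicator hΩ)).comp measurable_fst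
  refine Integrable.mono' (integrable_const 1) hmeas.aestronglyMeasurable ?_
  filter_upwards with z
  rcases eps_integrand_mem Ω z with h | h <;> simp [h]

/-- With disjoint source/target supports and `P_s(Ω*_s) = P_t(Ω*_t) = 1/2`, the classifier
given by the indicator of `(X_s ∩ Ω*_s) ∪ (X_t ∩ (Ω*_t)ᶜ)` matches feature mass across
domains, achieves the optimal source error, but has target error `1 − ε_t(Ω*_t)`. -/
theorem feature_matching_bad_target {X : Type*} [MeasurableSpace X]
    (ps pt : Measure (X × Bool)) [IsProbabilityMeasure ps] [IsProbabilityMeasure pt]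
    (Xs Xt : Set X) (hXs : MeasurableSet Xs) (hXt : MeasurableSet Xt)
    (hdisj : Disjoint Xs Xt)
    (hPsXs : ps.map Prod.fst Xs = 1) (hPtXt : pt.map Prod.fst Xt = 1)
    (Ωs Ωt : Set X) (hΩs : MeasurableSet Ωs) (hΩt : MeasurableSet Ωt)
    (hΩs_opt : ∀ Ω : Set X, MeasurableSet Ω → eps ps Ωs ≤ eps ps Ω)
    (hΩt_opt : ∀ Ω : Set X, MeasurableSet Ω → eps pt Ωt ≤ eps pt Ω)
    (hms : ps.map Prod.fst Ωs = 1/2) (hmt : pt.map Prod.fst Ωt = 1/2) :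
    ps.map Prod.fst ((Xs ∩ Ωs) ∪ (Xt ∩ Ωtᶜ)) = 1/2 ∧
    pt.map Prod.fst ((Xs ∩ Ωs) ∪ (Xt ∩ Ωtᶜ)) = 1/2 ∧
    eps ps ((Xs ∩ Ωs) ∪ (Xt ∩ Ωtᶜ)) = eps ps Ωs ∧
    eps pt ((Xs ∩ Ωs) ∪ (Xt ∩ Ωtᶜ)) = 1 - eps pt Ωt := by
  set Ω := (Xs ∩ Ωs) ∪ (Xt ∩ Ωtᶜ) with hΩdef
  have hmemS : ∀ x, x ∈ Xs → (x ∈ Ω ↔ x ∈ Ωs) := by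
    intro x hx
    have hxt : x ∉ Xt := fun h => hdisj.ne_of_mem hx h rfl
    simp [hΩdef, hx, hxt]
  have hmemT : ∀ x, x ∈ Xt → (x ∈ Ω ↔ x ∈ Ωtᶜ) := by
    intro x hx
    have hxs : x ∉ Xs := fun h => hdisj.ne_of_mem h hx rfl
    simp [hΩdef, hx, hxs]
  -- marginal a.e. facts
  have haeS : ∀ᵐ x ∂(ps.map Prod.fst), x ∈ Xs := by
    rw [ae_iff]
    have : (ps.map Prod.fst) Xsᶜ = 0 := by
      have : IsProbabilityMeasure (ps.map Prod.fst) :=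
        Measure.isProbabilityMeasure_map measurable_fst.aemeasurable
      rw [measure_compl hXs (measure_ne_top _ _), hPsXs, measure_univ, tsub_self]
    exact this
  have haeT : ∀ᵐ x ∂(pt.map Prod.fst), x ∈ Xt := by
    rw [ae_iff]
    have : (pt.map Prod.fst) Xtᶜ = 0 := by
      have : IsProbabilityMeasure (pt.map Prod.fst) :=
        Measure.isProbabilityMeasure_map measurable_fst.aemeasurable
      rw [measure_compl hXt (measure_ne_top _ _), hPtXt, measure_univ, tsub_self]
    exact this
  have haeSset : Ω =ᵐ[ps.map Prod.fst] Ωs := by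
    filter_upwards [haeS] with x hx
    exact eq_iff_iff.2 (hmemS x hx)
  have haeTset : Ω =ᵐ[pt.map Prod.fst] Ωtᶜ := by
    filter_upwards [haeT] with x hx
    exact eq_iff_iff.2 (hmemT x hx)
  -- a.e. facts on product measures
  have haePS : ∀ᵐ z ∂ps, z.1 ∈ Xs := by
    rw [ae_iff]
    have h1 : ps (Prod.fst ⁻¹' Xs) = 1 := by
      rw [← Measure.map_apply measurable_fst hXs]; exact hPsXs
    have := measure_compl (measurable_fst hXs) (measure_ne_top ps _)
    rw [h1, measure_univ, tsub_self] at this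
    exact this
  have haePT : ∀ᵐ z ∂pt, z.1 ∈ Xt := by
    rw [ae_iff]
    have h1 : pt (Prod.fst ⁻¹' Xt) = 1 := by
      rw [← Measure.map_apply measurable_fst hXt]; exact hPtXt
    have := measure_compl (measurable_fst hXt) (measure_ne_top pt _)
    rw [h1, measure_univ, tsub_self] at this
    exact this
  have heps_s : eps ps Ω = eps ps Ωs := by
    unfold eps
    apply integral_congr_ae
    filter_upwards [haePS] with z hz
    have : Ω.indicator (1 : X → ℝ) z.1 = Ωs.indicator (1 : X → ℝ) z.1 := by
      by_cases h : z.1 ∈ Ωs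
      · rw [indicator_of_mem ((hmemS z.1 hz).2 h), indicator_of_mem h]
      · rw [indicator_of_notMem (fun hh => h ((hmemS z.1 hz).1 hh)),
          indicator_of_notMem h]
    rw [this]
  have heps_t : eps pt Ω = eps pt Ωtᶜ := by
    unfold eps
    apply integral_congr_ae
    filter_upwards [haePT] with z hz
    have : Ω.indicator (1 : X → ℝ) z.1 = Ωtᶜ.indicator (1 : X → ℝ) z.1 := by
      by_cases h : z.1 ∈ Ωtᶜ
      · rw [indicator_of_mem ((hmemT z.1 hz).2 h), indicator_of_mem h]
      · rw [indicator_of_notMem (fun hh => h ((hmemT z.1 hz).1 hh)),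
          indicator_of_notMem h]
    rw [this]
  have heps_compl : eps pt Ωtᶜ = 1 - eps pt Ωt := by
    have hpt : ∀ z : X × Bool,
        |(if z.2 then (1 : ℝ) else 0) - Ωtᶜ.indicator (1 : X → ℝ) z.1| =
        1 - |(if z.2 then (1 : ℝ) else 0) - Ωt.indicator (1 : X → ℝ) z.1| := by
      intro z
      by_cases h : z.1 ∈ Ωt <;> cases z.2 <;> simp [h]
    unfold eps
    simp_rw [hpt]
    rw [integral_sub (integrable_const 1) (eps_integrable pt Ωt hΩt)]
    simp
  refine ⟨?_, ?_, heps_s, heps_t.trans heps_compl⟩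
  · rw [measure_congr haeSset, hms]
  · rw [measure_congr haeTset]
    show (pt.map Prod.fst) (Ωtᶜ : Set X) = 1/2
    rw [measure_compl hΩt (measure_ne_top _ _)]
    have : IsProbabilityMeasure (pt.map Prod.fst) :=
      Measure.isProbabilityMeasure_map measurable_fst.aemeasurable
    rw [measure_univ, hmt]
    rw [one_div, ENNReal.one_sub_inv_two]
end

section
/- The Ben-David adaptation bound for indicator classifiers: for probability distributions p_s, p_t on X × {0,1} and any measurable classifiers h, h* : X → {0,1}, the target error satisfies ε_t(h) ≤ ε_s(h) + ε_t(h*) + ε_s(h*) + |P_s(h ≠ h*) − P_t(h ≠ h*)|, where ε_p(h) = E_{(x,y)∼p}|y − h(x)| and P_s, P_t are the X-marginals. -/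
open MeasureTheory Set

/-- Generalization error of a binary classifier `h` under a joint distribution `p`. -/
noncomputable def err {X : Type*} [MeasurableSpace X]
    (p : Measure (X × Bool)) (h : X → Bool) : ℝ :=
  ∫ z, |(if z.2 then (1 : ℝ) else 0) - (if h z.1 then (1 : ℝ) else 0)| ∂p

lemma err_eq_measure {X : Type*} [MeasurableSpace X]
    (p : Measure (X × Bool)) (h : X → Bool) (hm : Measurable h) :
    err p h = (p {z : X × Bool | z.2 ≠ h z.1}).toReal := by
  have hs : MeasurableSet {z : X × Bool | z.2 ≠ h z.1} := by
    have : {z : X × Bool | z.2 ≠ h z.1} =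
        (fun z : X × Bool => (z.2, h z.1)) ⁻¹' {q : Bool × Bool | q.1 ≠ q.2} := rfl
    rw [this]
    exact (measurable_snd.prodMk (hm.comp measurable_fst))
      ((Set.to_countable _).measurableSet)
  have : err p h = ∫ z, ({z : X × Bool | z.2 ≠ h z.1}).indicator 1 z ∂p := by
    unfold err
    congr 1
    funext z
    by_cases h1 : z.2 <;> by_cases h2 : h z.1 <;>
      simp [h1, h2, Set.indicator, abs_of_nonneg]
  rw [this, integral_indicator_one hs]
  rfl

lemma toReal_union_le {X : Type*} [MeasurableSpace X]
    (p : Measure (X × Bool)) [IsProbabilityMeasure p] {A B C : Set (X × Bool)}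
    (hsub : A ⊆ B ∪ C) :
    (p A).toReal ≤ (p B).toReal + (p C).toReal := by
  have h1 : p A ≤ p B + p C := le_trans (measure_mono hsub) (measure_union_le B C)
  have hB : p B ≠ ⊤ := measure_ne_top p B
  have hC : p C ≠ ⊤ := measure_ne_top p C
  have := ENNReal.toReal_mono (by finiteness) h1
  rwa [ENNReal.toReal_add hB hC] at this

/-- Ben-David style adaptation bound for binary classifiers:
`ε_t(h) ≤ ε_s(h) + ε_t(h*) + ε_s(h*) + |P_s(h ≠ h*) − P_t(h ≠ h*)|`. -/
theorem adaptation_bound {X : Type*} [MeasurableSpace X]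
    (ps pt : Measure (X × Bool)) [IsProbabilityMeasure ps] [IsProbabilityMeasure pt]
    (h hstar : X → Bool) (hm : Measurable h) (hm' : Measurable hstar) :
    err pt h ≤ err ps h + err pt hstar + err ps hstar +
      |(ps.map Prod.fst {x | h x ≠ hstar x}).toReal -
       (pt.map Prod.fst {x | h x ≠ hstar x}).toReal| := by
  have hset : MeasurableSet {x : X | h x ≠ hstar x} := by
    have : {x : X | h x ≠ hstar x} =
        (fun x => (h x, hstar x)) ⁻¹' {q : Bool × Bool | q.1 ≠ q.2} := rfl
    rw [this]
    exact (hm.prodMk hm') ((Set.to_countable _).measurableSet)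
  have hmap : ∀ (p : Measure (X × Bool)),
      p.map Prod.fst {x | h x ≠ hstar x} = p {z : X × Bool | h z.1 ≠ hstar z.1} := by
    intro p
    rw [Measure.map_apply measurable_fst hset]
    rfl
  rw [err_eq_measure pt h hm, err_eq_measure ps h hm, err_eq_measure pt hstar hm',
    err_eq_measure ps hstar hm', hmap, hmap]
  set D : Set (X × Bool) := {z | h z.1 ≠ hstar z.1} with hD
  -- ε_t(h) ≤ ε_t(h*) + P_t(D)
  have h1 : (pt {z : X × Bool | z.2 ≠ h z.1}).toReal ≤
      (pt {z : X × Bool | z.2 ≠ hstar z.1}).toReal + (pt D).toReal := by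
    apply toReal_union_le
    intro z hz
    by_cases hq : z.2 = hstar z.1
    · right; simp only [hD, Set.mem_setOf_eq]
      intro heq; exact hz (heq ▸ hq)
    · left; exact hq
  -- P_s(D) ≤ ε_s(h) + ε_s(h*)
  have h2 : (ps D).toReal ≤
      (ps {z : X × Bool | z.2 ≠ h z.1}).toReal +
      (ps {z : X × Bool | z.2 ≠ hstar z.1}).toReal := by
    apply toReal_union_le
    intro z hz
    by_cases hq : z.2 = h z.1
    · right; simp only [Set.mem_setOf_eq]
      intro heq; exact hz (hq ▸ heq ▸ rfl)
    · left; exact hq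
  -- P_t(D) ≤ P_s(D) + |P_s(D) − P_t(D)|
  have h3 : (pt D).toReal ≤ (ps D).toReal + |(ps D).toReal - (pt D).toReal| := by
    have := abs_sub_abs_le_abs_sub (pt D).toReal (ps D).toReal
    have h4 := neg_abs_le ((ps D).toReal - (pt D).toReal)
    linarith [abs_of_nonneg (ENNReal.toReal_nonneg : (0:ℝ) ≤ (pt D).toReal),
      abs_of_nonneg (ENNReal.toReal_nonneg : (0:ℝ) ≤ (ps D).toReal)]
  linarith
end

section
/- Under the feature-matching construction with a label-flipping target partition, the composite classifier achieves minimal source error but maximal target error simultaneously with exactly matched feature distributions: there exists h with f_*P_s = f_*P_t, ε_s(h) = ε_s(Ω*_s), and ε_t(h) = 1 − ε_t(Ω*_t), assuming disjoint supports and P_s(Ω*_s) = P_t(Ω*_t) = 1/2. -/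
open MeasureTheory Set

lemma push_eq_of_measure_eq {X : Type*} [MeasurableSpace X]
    (μ ν : Measure X) [IsProbabilityMeasure μ] [IsProbabilityMeasure ν]
    (S : Set X) (hS : MeasurableSet S) (h : μ S = ν S) :
    μ.map (S.indicator (1 : X → ℝ)) = ν.map (S.indicator (1 : X → ℝ)) := by
  have hm : Measurable (S.indicator (1 : X → ℝ)) := measurable_one.indicator hS
  classical
  ext A hA
  rw [Measure.map_apply hm hA, Measure.map_apply hm hA]
  have hpre : S.indicator (1 : X → ℝ) ⁻¹' A =
      (if (1:ℝ) ∈ A then S else ∅) ∪ (if (0:ℝ) ∈ A then Sᶜ else ∅) := by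
    ext x
    by_cases hx : x ∈ S <;> by_cases h1 : (1:ℝ) ∈ A <;> by_cases h0 : (0:ℝ) ∈ A <;>
      simp [Set.indicator, hx, h1, h0]
  rw [hpre]
  have hcompl : μ Sᶜ = ν Sᶜ := by
    rw [measure_compl hS (measure_ne_top _ _), measure_compl hS (measure_ne_top _ _),
      measure_univ, measure_univ, h]
  split_ifs with h1 h0 h0
  · simp
  · simpa using h
  · simpa using hcompl
  · simp

lemma meas_inter_full {X : Type*} [MeasurableSpace X] (μ : Measure X)
    [IsProbabilityMeasure μ] {T : Set X} (hT : MeasurableSet T) (h : μ T = 1)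
    (A : Set X) : μ (A ∩ T) = μ A := by
  have hc : μ Tᶜ = 0 := by
    rw [measure_compl hT (measure_ne_top _ _), measure_univ, h, tsub_self]
  have h2 : μ (A \ T) = 0 :=
    measure_mono_null (fun x hx => hx.2) hc
  rw [← measure_inter_add_diff A hT, h2, add_zero]

/-- The feature-matching construction with a label-flipping target partition: the classifier
`h = 1_Ω` with `Ω = (X_s ∩ Ω*_s) ∪ (X_t ∩ (Ω*_t)ᶜ)` has exactly matched feature distributions
`f_* P_s = f_* P_t`, minimal source error, and maximal target error `1 − ε_t(Ω*_t)`. -/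
theorem feature_matching_label_flipping {X : Type*} [MeasurableSpace X]
    (ps pt : Measure (X × Bool)) [IsProbabilityMeasure ps] [IsProbabilityMeasure pt]
    (Xs Xt : Set X) (hXs : MeasurableSet Xs) (hXt : MeasurableSet Xt)
    (hdisj : Disjoint Xs Xt)
    (hPsXs : ps.map Prod.fst Xs = 1) (hPtXt : pt.map Prod.fst Xt = 1)
    (Ωs Ωt : Set X) (hΩs : MeasurableSet Ωs) (hΩt : MeasurableSet Ωt)
    (hΩs_opt : ∀ Ω : Set X, MeasurableSet Ω → eps ps Ωs ≤ eps ps Ω)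
    (hΩt_opt : ∀ Ω : Set X, MeasurableSet Ω → eps pt Ωt ≤ eps pt Ω)
    (hms : ps.map Prod.fst Ωs = 1/2) (hmt : pt.map Prod.fst Ωt = 1/2) :
    (ps.map Prod.fst).map (((Xs ∩ Ωs) ∪ (Xt ∩ Ωtᶜ)).indicator (1 : X → ℝ)) =
      (pt.map Prod.fst).map (((Xs ∩ Ωs) ∪ (Xt ∩ Ωtᶜ)).indicator (1 : X → ℝ)) ∧
    eps ps ((Xs ∩ Ωs) ∪ (Xt ∩ Ωtᶜ)) = eps ps Ωs ∧
    eps pt ((Xs ∩ Ωs) ∪ (Xt ∩ Ωtᶜ)) = 1 - eps pt Ωt := by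
  set Ω : Set X := (Xs ∩ Ωs) ∪ (Xt ∩ Ωtᶜ) with hΩdef
  have hΩ : MeasurableSet Ω := (hXs.inter hΩs).union (hXt.inter hΩt.compl)
  haveI : IsProbabilityMeasure (ps.map Prod.fst) :=
    Measure.isProbabilityMeasure_map measurable_fst.aemeasurable
  haveI : IsProbabilityMeasure (pt.map Prod.fst) :=
    Measure.isProbabilityMeasure_map measurable_fst.aemeasurable
  -- set identities
  have hsp : Ω ∩ Xs = Ωs ∩ Xs := by
    ext x
    constructor
    · rintro ⟨(⟨_, h2⟩ | ⟨h1, _⟩), hx⟩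
      · exact ⟨h2, hx⟩
      · exact absurd (hdisj.le_bot ⟨hx, h1⟩) (by simp)
    · rintro ⟨h1, hx⟩
      exact ⟨Or.inl ⟨hx, h1⟩, hx⟩
  have htp : Ω ∩ Xt = Ωtᶜ ∩ Xt := by
    ext x
    constructor
    · rintro ⟨(⟨h1, _⟩ | ⟨_, h2⟩), hx⟩
      · exact absurd (hdisj.le_bot ⟨h1, hx⟩) (by simp)
      · exact ⟨h2, hx⟩
    · rintro ⟨h1, hx⟩
      exact ⟨Or.inr ⟨hx, h1⟩, hx⟩
  -- a.e. membership
  have haes : ∀ᵐ z ∂ps, z.1 ∈ Xs := by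
    have h0 : ps.map Prod.fst Xsᶜ = 0 := by
      rw [measure_compl hXs (measure_ne_top _ _), measure_univ, hPsXs, tsub_self]
    rw [Measure.map_apply measurable_fst hXs.compl] at h0
    exact (ae_iff).2 h0
  have haet : ∀ᵐ z ∂pt, z.1 ∈ Xt := by
    have h0 : pt.map Prod.fst Xtᶜ = 0 := by
      rw [measure_compl hXt (measure_ne_top _ _), measure_univ, hPtXt, tsub_self]
    rw [Measure.map_apply measurable_fst hXt.compl] at h0
    exact (ae_iff).2 h0
  refine ⟨?_, ?_, ?_⟩
  · -- matched feature distributions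
    apply push_eq_of_measure_eq _ _ _ hΩ
    have h1 : ps.map Prod.fst Ω = 1/2 := by
      rw [← meas_inter_full (ps.map Prod.fst) hXs hPsXs Ω, hsp,
        meas_inter_full (ps.map Prod.fst) hXs hPsXs Ωs, hms]
    have h2 : pt.map Prod.fst Ω = 1/2 := by
      rw [← meas_inter_full (pt.map Prod.fst) hXt hPtXt Ω, htp,
        meas_inter_full (pt.map Prod.fst) hXt hPtXt Ωtᶜ,
        measure_compl hΩt (measure_ne_top _ _), measure_univ, hmt, one_div,
        ENNReal.one_sub_inv_two]
    rw [h1, h2]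
  · -- source error
    unfold eps
    apply integral_congr_ae
    filter_upwards [haes] with z hz
    have hind : Ω.indicator (1 : X → ℝ) z.1 = Ωs.indicator (1 : X → ℝ) z.1 := by
      have hiff : z.1 ∈ Ω ↔ z.1 ∈ Ωs := by
        constructor
        · rintro (⟨_, h2⟩ | ⟨h1, _⟩)
          · exact h2
          · exact absurd (hdisj.le_bot ⟨hz, h1⟩) (by simp)
        · exact fun h => Or.inl ⟨hz, h⟩
      by_cases h1 : z.1 ∈ Ωs
      · simp [Set.indicator_of_mem (hiff.2 h1), Set.indicator_of_mem h1]
      · simp [Set.indicator_of_notMem (fun h => h1 (hiff.1 h)),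
          Set.indicator_of_notMem h1]
    rw [hind]
  · -- target error
    have hgm : Measurable (fun z : X × Bool =>
        |(if z.2 then (1 : ℝ) else 0) - Ωt.indicator (1 : X → ℝ) z.1|) := by
      apply Measurable.abs
      apply Measurable.sub
      · exact (measurable_from_top : Measurable fun b : Bool => if b then (1:ℝ) else 0).comp measurable_snd
      · exact (measurable_one.indicator hΩt).comp measurable_fst
    have hgi : Integrable (fun z : X × Bool =>
        |(if z.2 then (1 : ℝ) else 0) - Ωt.indicator (1 : X → ℝ) z.1|) pt := by
      apply (integrable_const (1 : ℝ)).mono' hgm.aestronglyMeasurable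
      filter_upwards with z
      rw [Real.norm_eq_abs, abs_abs]
      by_cases h1 : z.1 ∈ Ωt <;> cases z.2 <;> simp [h1] <;> norm_num
    have key : eps pt Ω = ∫ z, (1 - |(if z.2 then (1 : ℝ) else 0) -
        Ωt.indicator (1 : X → ℝ) z.1|) ∂pt := by
      unfold eps
      apply integral_congr_ae
      filter_upwards [haet] with z hz
      have hind : Ω.indicator (1 : X → ℝ) z.1 = 1 - Ωt.indicator (1 : X → ℝ) z.1 := by
        have hiff : z.1 ∈ Ω ↔ z.1 ∉ Ωt := by
          constructor
          · rintro (⟨h1, _⟩ | ⟨_, h2⟩)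
            · exact absurd (hdisj.le_bot ⟨h1, hz⟩) (by simp)
            · exact h2
          · exact fun h => Or.inr ⟨hz, h⟩
        by_cases h1 : z.1 ∈ Ωt
        · simp [Set.indicator_of_notMem (fun h => (hiff.1 h) h1),
            Set.indicator_of_mem h1]
        · simp [Set.indicator_of_mem (hiff.2 h1), Set.indicator_of_notMem h1]
      rw [hind]
      by_cases h1 : z.1 ∈ Ωt <;> cases z.2 <;> simp [h1] <;> norm_num
    rw [key, integral_sub (integrable_const 1) hgi, integral_const, probReal_univ]
    unfold eps
    simp
end
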